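/- Let H be a complex Hilbert space, let T be a bounded linear operator on H, and let T = U|T| be its canonical polar decomposition. Then the following are equivalent: (i) T is quasinormal, i.e. T(T*T) = (T*T)T; (ii) λT + (1-λ)|T|U = |T|U for all λ ∈ [0,1]; (iii) λT + (1-λ)|T|U = |T|U for some λ ∈ (0,1]. -/

import Mathlib

open ContinuousLinearMap

section Aux

variable {H : Type*} [NormedAddCommGroup H] [InnerProductSpace ℂ H] [CompleteSpace H]

local notation "⟪" x ", " y "⟫" => @inner ℂ _ _ x y

lemma my_commute_cfc (a b : H →L[ℂ] H) (ha : IsSelfAdjoint a) (hab : Commute b a)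
    (f : ℝ → ℝ) (hf : ContinuousOn f (spectrum ℝ a)) : Commute b (cfc f a) := by
  rw [cfc_apply f a ha hf]
  set g : C(spectrum ℝ a, ℝ) := ⟨_, hf.restrict⟩
  induction g using ContinuousMap.induction_on_of_compact with
  | const r =>
    have : (ContinuousMap.const (spectrum ℝ a) r) = algebraMap ℝ C(spectrum ℝ a, ℝ) r := rfl
    rw [this, AlgHomClass.commutes]
    exact (Algebra.commutes r b).symm
  | id => rw [cfcHom_id ha]; exact hab
  | star_id =>
    have : star ((ContinuousMap.id ℝ).restrict (spectrum ℝ a)) =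
        (ContinuousMap.id ℝ).restrict (spectrum ℝ a) := by ext x; simp
    rw [this, cfcHom_id ha]; exact hab
  | add f g hfc hgc => rw [map_add]; exact hfc.add_right hgc
  | mul f g hfc hgc => rw [map_mul]; exact hfc.mul_right hgc
  | frequently f hfreq =>
    have hcl : IsClosed {g : C(spectrum ℝ a, ℝ) | Commute b (cfcHom ha g)} := by
      have hc : Continuous (cfcHom ha (R := ℝ)) := (cfcHom_isClosedEmbedding ha).continuous
      exact isClosed_eq ((continuous_mul_left b).comp hc) ((continuous_mul_right b).comp hc)
    exact hcl.closure_subset (mem_closure_iff_frequently.mpr hfreq)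

lemma my_sqrt_sq (R : H →L[ℂ] H) (hR : R.IsPositive) : cfc Real.sqrt (R * R) = R := by
  have hR0 : (0 : H →L[ℂ] H) ≤ R := (nonneg_iff_isPositive R).mpr hR
  have hsa : IsSelfAdjoint R := hR.isSelfAdjoint
  have h1 : R * R = cfc (fun x : ℝ => x * x) R := by
    rw [cfc_mul (fun x : ℝ => x) (fun x : ℝ => x) R, cfc_id' ℝ R]
  rw [h1, ← cfc_comp Real.sqrt (fun x : ℝ => x * x) R]
  calc cfc (fun x => Real.sqrt (x * x)) R = cfc (fun x : ℝ => x) R := by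
        apply cfc_congr
        intro x hx
        exact Real.sqrt_mul_self (spectrum_nonneg_of_nonneg hR0 hx)
    _ = R := cfc_id' ℝ R

lemma my_key (T U R : H →L[ℂ] H)
    (hRpos : R.IsPositive) (hRsq : R * R = adjoint T * T)
    (hker : LinearMap.ker (U : H →ₗ[ℂ] H) = LinearMap.ker (T : H →ₗ[ℂ] H))
    (hTUR : T = U * R)
    (hq : T * (adjoint T * T) = (adjoint T * T) * T) : T = R * U := by
  have hsa : IsSelfAdjoint R := hRpos.isSelfAdjoint
  have hRadj : adjoint R = R := by rw [← star_eq_adjoint]; exact hsa.star_eq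
  have hsa2 : IsSelfAdjoint (R * R) := by
    rw [IsSelfAdjoint, star_mul, hsa.star_eq]
  have hcomm2 : Commute T (R * R) := by
    show T * (R * R) = (R * R) * T
    rw [hRsq]; exact hq
  have hTS : Commute T R := by
    have h := my_commute_cfc (R * R) T hsa2 hcomm2 Real.sqrt
      (Real.continuous_sqrt.continuousOn)
    rwa [my_sqrt_sq R hRpos] at h
  have hRT : ∀ x : H, ⟪R x, R x⟫ = ⟪T x, T x⟫ := by
    intro x
    have h1 : ⟪(R * R) x, x⟫ = ⟪R x, R x⟫ := by
      calc ⟪(R * R) x, x⟫ = ⟪adjoint R (R x), x⟫ := by rw [mul_apply_eq_comp, hRadj]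
        _ = ⟪R x, R x⟫ := adjoint_inner_left R x (R x)
    have h2 : ⟪(adjoint T * T) x, x⟫ = ⟪T x, T x⟫ := by
      rw [mul_apply_eq_comp]
      exact adjoint_inner_left T x (T x)
    rw [← h1, ← h2, hRsq]
  have hker2 : ∀ x : H, R x = 0 → T x = 0 := fun x hx => by
    rw [← inner_self_eq_zero (𝕜 := ℂ) (x := T x), ← hRT x,
      inner_self_eq_zero (𝕜 := ℂ)]
    exact hx
  set D := U * R - R * U with hD
  have hDR : D * R = 0 := by
    have h3 : (U * R) * R = (R * U) * R := by
      have h := hTS.eq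
      rw [hTUR] at h
      rw [mul_assoc R U R]
      exact h
    rw [hD, sub_mul, h3, sub_self]
  have hDzero : D = 0 := by
    have hKcl : IsClosed (LinearMap.ker (D : H →ₗ[ℂ] H) : Set H) := isClosed_ker D
    have hrange : LinearMap.range (R : H →ₗ[ℂ] H) ≤ LinearMap.ker (D : H →ₗ[ℂ] H) := by
      rintro _ ⟨y, rfl⟩
      have : (D * R) y = 0 := by rw [hDR]; rfl
      simpa [mul_apply_eq_comp] using this
    have hkerle : LinearMap.ker (R : H →ₗ[ℂ] H) ≤ LinearMap.ker (D : H →ₗ[ℂ] H) := by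
      intro x hx
      have hxR : R x = 0 := hx
      have hxT : T x = 0 := hker2 x hxR
      have hxU : U x = 0 := by
        have : x ∈ LinearMap.ker (T : H →ₗ[ℂ] H) := hxT
        rw [← hker] at this
        exact this
      show D x = 0
      simp [hD, sub_apply, mul_apply_eq_comp, hxR, hxU, map_zero]
    have hclosure : (LinearMap.range (R : H →ₗ[ℂ] H)).topologicalClosure ≤ LinearMap.ker (D : H →ₗ[ℂ] H) :=
      Submodule.topologicalClosure_minimal _ hrange hKcl
    have hperp : (LinearMap.ker (R : H →ₗ[ℂ] H))ᗮ ≤ LinearMap.ker (D : H →ₗ[ℂ] H) := by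
      have h5 : (LinearMap.range (R : H →ₗ[ℂ] H))ᗮ ≤ LinearMap.ker (R : H →ₗ[ℂ] H) := by
        intro x hx
        have h6 : ∀ y : H, ⟪R y, x⟫ = 0 := fun y =>
          hx _ (LinearMap.mem_range_self (R : H →ₗ[ℂ] H) y)
        have h7 : ⟪R x, R x⟫ = 0 := by
          calc ⟪R x, R x⟫ = ⟪adjoint R (R x), x⟫ := (adjoint_inner_left R x (R x)).symm
            _ = ⟪R (R x), x⟫ := by rw [hRadj]
            _ = 0 := h6 (R x)

        exact LinearMap.mem_ker.mpr (inner_self_eq_zero.mp h7)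
      calc (LinearMap.ker (R : H →ₗ[ℂ] H))ᗮ ≤ (LinearMap.range (R : H →ₗ[ℂ] H))ᗮᗮ := Submodule.orthogonal_le h5
        _ = (LinearMap.range (R : H →ₗ[ℂ] H)).topologicalClosure :=
            Submodule.orthogonal_orthogonal_eq_closure _
        _ ≤ LinearMap.ker (D : H →ₗ[ℂ] H) := hclosure
    haveI : CompleteSpace (LinearMap.ker (R : H →ₗ[ℂ] H)) := (isClosed_ker R).completeSpace_coe
    have htop : (⊤ : Submodule ℂ H) ≤ LinearMap.ker (D : H →ₗ[ℂ] H) := by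
      rw [← Submodule.sup_orthogonal_of_hasOrthogonalProjection (K := LinearMap.ker (R : H →ₗ[ℂ] H))]
      exact sup_le hkerle hperp
    ext x
    exact htop trivial
  rw [hTUR]
  exact sub_eq_zero.mp hDzero

end Aux

/-- The λ-mean transform equals the Duggal transform `T^D = |T|U` iff `T` is quasinormal. -/
theorem stmt1 {H : Type*} [NormedAddCommGroup H] [InnerProductSpace ℂ H] [CompleteSpace H]
    (T U R : H →L[ℂ] H)
    (hRpos : R.IsPositive) (hRsq : R * R = adjoint T * T)
    (hUpar : U * adjoint U * U = U)
    (hker : LinearMap.ker (U : H →ₗ[ℂ] H) = LinearMap.ker (T : H →ₗ[ℂ] H))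
    (hTUR : T = U * R) :
    List.TFAE
      [T * (adjoint T * T) = (adjoint T * T) * T,
       ∀ l : ℝ, l ∈ Set.Icc (0 : ℝ) 1 → (l : ℂ) • T + ((1 : ℂ) - (l : ℂ)) • (R * U) = R * U,
       ∃ l : ℝ, l ∈ Set.Ioc (0 : ℝ) 1 ∧ (l : ℂ) • T + ((1 : ℂ) - (l : ℂ)) • (R * U) = R * U] := by
  tfae_have 1 → 2 := by
    intro h1 l hl
    have hT : T = R * U := my_key T U R hRpos hRsq hker hTUR h1
    rw [← hT, ← add_smul, add_sub_cancel, one_smul]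
  tfae_have 2 → 3 := by
    intro h2
    exact ⟨1, ⟨one_pos, le_refl 1⟩, h2 1 ⟨zero_le_one, le_refl 1⟩⟩
  tfae_have 3 → 1 := by
    rintro ⟨l, hl, heq⟩
    have hl0 : (l : ℂ) ≠ 0 := by exact_mod_cast ne_of_gt hl.1
    have hT : T = R * U := by
      have hsmul : (l : ℂ) • T = (l : ℂ) • (R * U) := by
        calc (l : ℂ) • T
            = ((l : ℂ) • T + ((1 : ℂ) - (l : ℂ)) • (R * U)) - ((1 : ℂ) - (l : ℂ)) • (R * U) := by
              rw [add_sub_cancel_right]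
          _ = (R * U) - ((1 : ℂ) - (l : ℂ)) • (R * U) := by rw [heq]
          _ = (l : ℂ) • (R * U) := by module
      exact smul_right_injective _ hl0 hsmul
    have hC : Commute U R := by rw [Commute, SemiconjBy, ← hTUR, hT]
    show T * (adjoint T * T) = (adjoint T * T) * T
    rw [← hRsq, hTUR]
    exact ((hC.mul_right hC).mul_left ((Commute.refl R).mul_right (Commute.refl R))).eq
  tfae_finish
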